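/- For every integer ν ≥ 1 and every real c > 0 there exists a real C > 0 such that the following holds for all reals L ≥ 3 and P ≥ 3. Let I(P) denote the set of primes p ∈ [P,2P] with p > 3 and p not dividing Δ_E. Suppose that for every squarefree odd integer r > 1 having at most ν prime factors, all of which lie in [L,2L], one has #{ p ∈ I(P) : r divides D_p } ≤ c·( P/(φ(r)·log P) + r³·P^{1/2}·log P ), where φ is Euler's totient function. Then Σ_{p ∈ I(P)} ω_L(D_p)^ν ≤ C·( P/(log L · log P) + L^{4ν}·P^{1/2}·(log P)/(log L)^ν ). -/

import Mathlib

open scoped Classical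

noncomputable section

/-- Number of 𝔽_p-rational points of the reduction mod `p` of `W`, including the
point at infinity. -/
def Np (W : WeierstrassCurve ℤ) (p : ℕ) : ℕ :=
  1 + Nat.card {xy : ZMod p × ZMod p //
    (W.map (Int.castRingHom (ZMod p))).toAffine.Equation xy.1 xy.2}

/-- Trace of Frobenius `t_p = p + 1 - N_p`. -/
def tp (W : WeierstrassCurve ℤ) (p : ℕ) : ℤ := (p : ℤ) + 1 - Np W p

/-- Frobenius discriminant `D_p = t_p ^ 2 - 4 p`. -/
def Dp (W : WeierstrassCurve ℤ) (p : ℕ) : ℤ := tp W p ^ 2 - 4 * p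

/-- `ℓ` is an Elkies prime for `E_p`: an odd prime `ℓ ≠ p` such that `D_p` is
congruent to a square modulo `ℓ` (0 counted as a square). -/
def IsElkies (W : WeierstrassCurve ℤ) (p ℓ : ℕ) : Prop :=
  ℓ.Prime ∧ Odd ℓ ∧ ℓ ≠ p ∧ IsSquare ((Dp W p : ZMod ℓ))

/-- `ℓ` is an Atkin prime for `E_p`. -/
def IsAtkin (W : WeierstrassCurve ℤ) (p ℓ : ℕ) : Prop :=
  ℓ.Prime ∧ Odd ℓ ∧ ℓ ≠ p ∧ ¬ IsSquare ((Dp W p : ZMod ℓ))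

/-- `R_e(p; L)`: the number of Elkies primes in `[L, 2L]`. -/
def Re (W : WeierstrassCurve ℤ) (L : ℝ) (p : ℕ) : ℕ :=
  {ℓ : ℕ | L ≤ (ℓ : ℝ) ∧ (ℓ : ℝ) ≤ 2 * L ∧ IsElkies W p ℓ}.ncard

/-- `R_a(p; L)`: the number of Atkin primes in `[L, 2L]`. -/
def Ra (W : WeierstrassCurve ℤ) (L : ℝ) (p : ℕ) : ℕ :=
  {ℓ : ℕ | L ≤ (ℓ : ℝ) ∧ (ℓ : ℝ) ≤ 2 * L ∧ IsAtkin W p ℓ}.ncard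

/-- The prime counting function `π(z)` at a real argument. -/
def primePi (z : ℝ) : ℕ := {q : ℕ | q.Prime ∧ (q : ℝ) ≤ z}.ncard

/-- `ω_L(d)`: the number of primes `ℓ ∈ [L, 2L]` dividing `d`. -/
def omegaL (L : ℝ) (d : ℤ) : ℕ :=
  {ℓ : ℕ | ℓ.Prime ∧ L ≤ (ℓ : ℝ) ∧ (ℓ : ℝ) ≤ 2 * L ∧ (ℓ : ℤ) ∣ d}.ncard

/-- The finset of odd primes `ℓ ∈ [L, 2L]` with `ℓ ≠ p`. -/
def oddPrimesBetween (L : ℝ) (p : ℕ) : Finset ℕ :=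
  (Finset.range (⌊2 * L⌋₊ + 1)).filter
    (fun ℓ => ℓ.Prime ∧ Odd ℓ ∧ ℓ ≠ p ∧ L ≤ (ℓ : ℝ) ∧ (ℓ : ℝ) ≤ 2 * L)

/-- The finset `I(P)` of primes `p ∈ [P, 2P]` with `p > 3` not dividing the
discriminant of `W`. -/
def goodPrimes (W : WeierstrassCurve ℤ) (P : ℝ) : Finset ℕ :=
  (Finset.range (⌊2 * P⌋₊ + 1)).filter
    (fun p => p.Prime ∧ 3 < p ∧ ¬ ((p : ℤ) ∣ W.Δ) ∧ P ≤ (p : ℝ) ∧ (p : ℝ) ≤ 2 * P)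

/-! ### Auxiliary lemmas -/

/-- The finset of primes in `[L, 2L]`. -/
def primesL (L : ℝ) : Finset ℕ :=
  (Finset.range (⌊2 * L⌋₊ + 1)).filter (fun ℓ => ℓ.Prime ∧ L ≤ (ℓ : ℝ) ∧ (ℓ : ℝ) ≤ 2 * L)

lemma aux_mem_primesL {L : ℝ} {ℓ : ℕ} :
    ℓ ∈ primesL L ↔ ℓ.Prime ∧ L ≤ (ℓ : ℝ) ∧ (ℓ : ℝ) ≤ 2 * L := by
  simp only [primesL, Finset.mem_filter, Finset.mem_range]
  refine ⟨fun h => h.2, fun h => ⟨?_, h⟩⟩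
  have h2 : ℓ ≤ ⌊2 * L⌋₊ := Nat.le_floor h.2.2
  omega

lemma aux_card_primesL {L : ℝ} (hL : 3 ≤ L) :
    ((primesL L).card : ℝ) * Real.log L ≤ 3 * L := by
  have hL0 : (0:ℝ) < L := by linarith
  have hsub : primesL L ⊆ (Finset.range (⌊2 * L⌋₊ + 1)).filter Nat.Prime := by
    intro ℓ hℓ
    simp only [primesL, Finset.mem_filter, Finset.mem_range] at hℓ ⊢
    exact ⟨hℓ.1, hℓ.2.1⟩
  have hprod : ∏ ℓ ∈ primesL L, ℓ ≤ 4 ^ ⌊2 * L⌋₊ := by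
    calc ∏ ℓ ∈ primesL L, ℓ
        ≤ ∏ ℓ ∈ (Finset.range (⌊2 * L⌋₊ + 1)).filter Nat.Prime, ℓ :=
          Finset.prod_le_prod_of_subset_of_one_le' hsub
            (fun ℓ hℓ _ => (Finset.mem_filter.mp hℓ).2.one_lt.le)
      _ = primorial ⌊2 * L⌋₊ := rfl
      _ ≤ 4 ^ ⌊2 * L⌋₊ := primorial_le_4_pow _
  have hlow : L ^ (primesL L).card ≤ ((∏ ℓ ∈ primesL L, ℓ : ℕ) : ℝ) := by
    rw [Nat.cast_prod]
    calc L ^ (primesL L).card = ∏ _ℓ ∈ primesL L, L := (Finset.prod_const L).symm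
      _ ≤ ∏ ℓ ∈ primesL L, (ℓ : ℝ) :=
          Finset.prod_le_prod (fun _ _ => hL0.le) (fun ℓ hℓ => (aux_mem_primesL.mp hℓ).2.1)
  have hup : ((∏ ℓ ∈ primesL L, ℓ : ℕ) : ℝ) ≤ (4 : ℝ) ^ (2 * L) := by
    calc ((∏ ℓ ∈ primesL L, ℓ : ℕ) : ℝ) ≤ ((4 ^ ⌊2 * L⌋₊ : ℕ) : ℝ) := by exact_mod_cast hprod
      _ = (4 : ℝ) ^ ((⌊2 * L⌋₊ : ℝ)) := by
          rw [Real.rpow_natCast]; push_cast; ring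
      _ ≤ (4 : ℝ) ^ (2 * L) := Real.rpow_le_rpow_of_exponent_le (by norm_num)
          (Nat.floor_le (by linarith))
  have key : L ^ (primesL L).card ≤ (4 : ℝ) ^ (2 * L) := hlow.trans hup
  have hlog := Real.log_le_log (pow_pos hL0 _) key
  rw [Real.log_pow, Real.log_rpow (by norm_num)] at hlog
  have h4 : Real.log 4 ≤ 1.5 := by
    have h2 : Real.log 4 = 2 * Real.log 2 := by
      rw [show (4:ℝ) = 2 ^ (2:ℕ) by norm_num, Real.log_pow]; push_cast; ring
    nlinarith [Real.log_two_lt_d9]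
  have h40 : 0 ≤ Real.log 4 := Real.log_nonneg (by norm_num)
  nlinarith [hlog]

lemma aux_coprime_prod {a : ℕ} {s : Finset ℕ} (ha : a ∉ s) (hap : a.Prime)
    (hs : ∀ p ∈ s, p.Prime) : a.Coprime (∏ p ∈ s, p) := by
  rw [hap.coprime_iff_not_dvd]
  intro hdvd
  obtain ⟨q, hq, hq2⟩ := (hap.prime.dvd_finset_prod_iff _).mp hdvd
  rw [Nat.prime_dvd_prime_iff_eq hap (hs q hq)] at hq2
  exact ha (hq2 ▸ hq)

lemma aux_prod_primes_squarefree {s : Finset ℕ} (hs : ∀ p ∈ s, p.Prime) :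
    Squarefree (∏ p ∈ s, p) := by
  classical
  induction s using Finset.induction_on with
  | empty => simpa using squarefree_one
  | @insert a s' ha ih =>
    rw [Finset.prod_insert ha]
    have hap : a.Prime := hs a (Finset.mem_insert_self a s')
    have hs' : ∀ p ∈ s', p.Prime := fun p hp => hs p (Finset.mem_insert_of_mem hp)
    exact Nat.squarefree_mul_iff.mpr
      ⟨aux_coprime_prod ha hap hs', hap.prime.squarefree, ih hs'⟩

lemma aux_totient_prod {s : Finset ℕ} (hs : ∀ p ∈ s, p.Prime) :
    Nat.totient (∏ p ∈ s, p) = ∏ p ∈ s, (p - 1) := by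
  classical
  induction s using Finset.induction_on with
  | empty => simp
  | @insert a s' ha ih =>
    rw [Finset.prod_insert ha, Finset.prod_insert ha]
    have hap : a.Prime := hs a (Finset.mem_insert_self a s')
    have hs' : ∀ p ∈ s', p.Prime := fun p hp => hs p (Finset.mem_insert_of_mem hp)
    rw [Nat.totient_mul (aux_coprime_prod ha hap hs'), Nat.totient_prime hap, ih hs']

lemma aux_prod_dvd_iff {S : Finset ℕ} (hS : ∀ p ∈ S, p.Prime) (d : ℤ) :
    ((∏ p ∈ S, p : ℕ) : ℤ) ∣ d ↔ ∀ p ∈ S, (p : ℤ) ∣ d := by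
  rw [Int.natCast_dvd]
  constructor
  · intro h p hp
    rw [Int.natCast_dvd]
    exact (Finset.dvd_prod_of_mem _ hp).trans h
  · intro h
    refine Finset.prod_primes_dvd _ (fun p hp => (hS p hp).prime) (fun p hp => ?_)
    rw [← Int.natCast_dvd]
    exact h p hp

lemma aux_pow_card_le {A : Finset ℕ} {ν : ℕ} (hν : 1 ≤ ν) :
    A.card ^ ν ≤ ((A.powerset.filter (fun S => S.Nonempty ∧ S.card ≤ ν)).card) * ν ^ ν := by
  classical
  haveI : Nonempty (Fin ν) := ⟨⟨0, hν⟩⟩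
  have h1 : A.card ^ ν = (Fintype.piFinset fun _ : Fin ν => A).card :=
    (Fintype.card_piFinset_const A ν).symm
  rw [h1, Finset.card_eq_sum_card_fiberwise
    (f := fun f : Fin ν → ℕ => Finset.image f Finset.univ)
    (t := A.powerset.filter (fun S => S.Nonempty ∧ S.card ≤ ν))
    (fun f hf => by
      rw [Finset.mem_coe, Finset.mem_filter, Finset.mem_powerset]
      refine ⟨?_, Finset.univ_nonempty.image f, ?_⟩
      · intro x hx
        obtain ⟨i, _, rfl⟩ := Finset.mem_image.mp hx
        exact Fintype.mem_piFinset.mp (Finset.mem_coe.mp hf) i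
      · exact (Finset.card_image_le).trans (by simp))]
  have hbound : ∀ S ∈ A.powerset.filter (fun S => S.Nonempty ∧ S.card ≤ ν),
      ((Fintype.piFinset fun _ : Fin ν => A).filter
        (fun f => Finset.image f Finset.univ = S)).card ≤ ν ^ ν := by
    intro S hS
    have hScard : S.card ≤ ν := (Finset.mem_filter.mp hS).2.2
    have hsub : (Fintype.piFinset fun _ : Fin ν => A).filter
        (fun f => Finset.image f Finset.univ = S) ⊆ Fintype.piFinset fun _ : Fin ν => S := by
      intro f hf
      rw [Fintype.mem_piFinset]
      intro i
      rw [← (Finset.mem_filter.mp hf).2]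
      exact Finset.mem_image_of_mem f (Finset.mem_univ i)
    calc ((Fintype.piFinset fun _ : Fin ν => A).filter
          (fun f => Finset.image f Finset.univ = S)).card
        ≤ (Fintype.piFinset fun _ : Fin ν => S).card := Finset.card_le_card hsub
      _ = S.card ^ ν := Fintype.card_piFinset_const S ν
      _ ≤ ν ^ ν := Nat.pow_le_pow_left hScard ν
  calc ∑ S ∈ A.powerset.filter (fun S => S.Nonempty ∧ S.card ≤ ν),
        ((Fintype.piFinset fun _ : Fin ν => A).filter
          (fun f => Finset.image f Finset.univ = S)).card
      ≤ (A.powerset.filter (fun S => S.Nonempty ∧ S.card ≤ ν)).card • ν ^ ν :=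
        Finset.sum_le_card_nsmul _ _ _ hbound
    _ = _ := by rw [smul_eq_mul]

theorem omegaL_moment_bound (W : WeierstrassCurve ℤ) (hΔ : W.Δ ≠ 0)
    (ν : ℕ) (hν : 1 ≤ ν) (c : ℝ) (hc : 0 < c) :
    ∃ C : ℝ, 0 < C ∧ ∀ L P : ℝ, 3 ≤ L → 3 ≤ P →
      (∀ r : ℕ, 1 < r → Squarefree r → Odd r → r.primeFactors.card ≤ ν →
        (∀ ℓ ∈ r.primeFactors, L ≤ (ℓ : ℝ) ∧ (ℓ : ℝ) ≤ 2 * L) →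
        (((goodPrimes W P).filter (fun p => (r : ℤ) ∣ Dp W p)).card : ℝ) ≤
          c * (P / (r.totient * Real.log P) + (r : ℝ) ^ 3 * Real.sqrt P * Real.log P)) →
      ∑ p ∈ goodPrimes W P, (omegaL L (Dp W p) : ℝ) ^ ν ≤
        C * (P / (Real.log L * Real.log P) +
          L ^ (4 * ν) * Real.sqrt P * Real.log P / (Real.log L) ^ ν) := by
  have hν0 : (0:ℝ) < (ν:ℝ) := by exact_mod_cast hν
  refine ⟨c * (ν:ℝ) ^ (ν + 1) * 24 ^ ν,
    mul_pos (mul_pos hc (pow_pos hν0 _)) (pow_pos (by norm_num) _), ?_⟩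
  intro L P hL hP hyp
  have hL0 : (0:ℝ) < L := by linarith
  have hlogL1 : 1 < Real.log L := by
    rw [Real.lt_log_iff_exp_lt hL0]
    linarith [Real.exp_one_lt_d9]
  have hlogL0 : (0:ℝ) < Real.log L := by linarith
  have hlogP : (0:ℝ) < Real.log P := Real.log_pos (by linarith)
  have hsqrtP : (0:ℝ) ≤ Real.sqrt P := Real.sqrt_nonneg P
  have hP0 : (0:ℝ) < P := by linarith
  have hL1 : (0:ℝ) < L - 1 := by linarith
  classical
  set F : Finset ℕ := primesL L with hFdef
  set PF : Finset (Finset ℕ) := F.powerset.filter (fun S => S.Nonempty ∧ S.card ≤ ν)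
    with hPFdef
  have hFmem : ∀ ℓ ∈ F, ℓ.Prime ∧ L ≤ (ℓ:ℝ) ∧ (ℓ:ℝ) ≤ 2 * L := fun ℓ h =>
    aux_mem_primesL.mp h
  have hPFfacts : ∀ S ∈ PF, S ⊆ F ∧ S.Nonempty ∧ S.card ≤ ν := by
    intro S hS
    rw [hPFdef, Finset.mem_filter, Finset.mem_powerset] at hS
    exact ⟨hS.1, hS.2.1, hS.2.2⟩
  -- Step 1: pointwise bound
  have step1 : ∀ p : ℕ, ((omegaL L (Dp W p) : ℝ)) ^ ν ≤
      (ν:ℝ) ^ ν * ∑ S ∈ PF, (if ((∏ ℓ ∈ S, ℓ : ℕ) : ℤ) ∣ Dp W p then (1:ℝ) else 0) := by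
    intro p
    have homega : omegaL L (Dp W p) = (F.filter (fun (ℓ:ℕ) => (ℓ:ℤ) ∣ Dp W p)).card := by
      have hsets : {ℓ : ℕ | ℓ.Prime ∧ L ≤ (ℓ : ℝ) ∧ (ℓ : ℝ) ≤ 2 * L ∧ (ℓ : ℤ) ∣ Dp W p}
          = ↑(F.filter (fun (ℓ:ℕ) => (ℓ:ℤ) ∣ Dp W p)) := by
        ext ℓ
        simp only [Set.mem_setOf_eq, Finset.coe_filter, Set.mem_setOf_eq, hFdef,
          aux_mem_primesL]
        tauto
      rw [omegaL, hsets, Set.ncard_coe_finset]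
    have hPA : (F.filter (fun (ℓ:ℕ) => (ℓ:ℤ) ∣ Dp W p)).powerset.filter
        (fun S => S.Nonempty ∧ S.card ≤ ν)
        = PF.filter (fun (S : Finset ℕ) => ((∏ ℓ ∈ S, ℓ : ℕ) : ℤ) ∣ Dp W p) := by
      ext S
      simp only [Finset.mem_filter, Finset.mem_powerset, hPFdef]
      constructor
      · rintro ⟨hsub, hne, hcard⟩
        have hSF : S ⊆ F := fun x hx => (Finset.mem_filter.mp (hsub hx)).1
        have hprime : ∀ q ∈ S, q.Prime := fun q hq => (hFmem q (hSF hq)).1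
        exact ⟨⟨hSF, hne, hcard⟩, (aux_prod_dvd_iff hprime _).mpr
          (fun q hq => (Finset.mem_filter.mp (hsub hq)).2)⟩
      · rintro ⟨⟨hSF, hne, hcard⟩, hdvd⟩
        have hprime : ∀ q ∈ S, q.Prime := fun q hq => (hFmem q (hSF hq)).1
        exact ⟨fun q hq => Finset.mem_filter.mpr
          ⟨hSF hq, (aux_prod_dvd_iff hprime _).mp hdvd q hq⟩, hne, hcard⟩
    have hcount := aux_pow_card_le (A := F.filter (fun (ℓ:ℕ) => (ℓ:ℤ) ∣ Dp W p)) hν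
    rw [hPA] at hcount
    rw [homega]
    calc ((F.filter (fun (ℓ:ℕ) => (ℓ:ℤ) ∣ Dp W p)).card : ℝ) ^ ν
        ≤ ((PF.filter (fun (S : Finset ℕ) => ((∏ ℓ ∈ S, ℓ : ℕ) : ℤ) ∣ Dp W p)).card : ℝ) * (ν:ℝ) ^ ν :=
          by exact_mod_cast hcount
      _ = (ν:ℝ) ^ ν * ∑ S ∈ PF, (if ((∏ ℓ ∈ S, ℓ : ℕ) : ℤ) ∣ Dp W p then (1:ℝ) else 0) := by
          rw [Finset.sum_boole]; ring
  -- the per-subset bound from the hypothesis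
  set H : ℕ → ℝ := fun k => c * (P / ((L - 1) ^ k * Real.log P)
      + ((2 * L) ^ ν) ^ 3 * Real.sqrt P * Real.log P) with hHdef
  have step3 : ∀ S ∈ PF,
      (((goodPrimes W P).filter (fun p => ((∏ ℓ ∈ S, ℓ : ℕ) : ℤ) ∣ Dp W p)).card : ℝ)
        ≤ H S.card := by
    intro S hS
    obtain ⟨hSF, hSne, hScard⟩ := hPFfacts S hS
    have hprime : ∀ q ∈ S, q.Prime := fun q hq => (hFmem q (hSF hq)).1
    have hge : ∀ q ∈ S, L ≤ (q:ℝ) := fun q hq => (hFmem q (hSF hq)).2.1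
    have hle : ∀ q ∈ S, (q:ℝ) ≤ 2 * L := fun q hq => (hFmem q (hSF hq)).2.2
    have hr1 : 1 < ∏ ℓ ∈ S, ℓ := by
      obtain ⟨ℓ0, hℓ0⟩ := hSne
      have hdvd : ℓ0 ∣ ∏ ℓ ∈ S, ℓ := Finset.dvd_prod_of_mem _ hℓ0
      have hpos : 0 < ∏ ℓ ∈ S, ℓ := Finset.prod_pos (fun q hq => (hprime q hq).pos)
      have h2 : 2 ≤ ℓ0 := (hprime ℓ0 hℓ0).two_le
      have h3 := Nat.le_of_dvd hpos hdvd
      omega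
    have hsq : Squarefree (∏ ℓ ∈ S, ℓ) := aux_prod_primes_squarefree hprime
    have hodd : Odd (∏ ℓ ∈ S, ℓ) := by
      rw [← Nat.not_even_iff_odd]
      intro h2
      obtain ⟨q, hq, hq2⟩ := (Nat.prime_two.prime.dvd_finset_prod_iff _).mp h2.two_dvd
      have hq2' : q = 2 := ((Nat.prime_dvd_prime_iff_eq Nat.prime_two (hprime q hq)).mp hq2).symm
      have h3 := hge q hq
      rw [hq2'] at h3
      norm_num at h3
      linarith
    have hfac : (∏ ℓ ∈ S, ℓ).primeFactors = S := Nat.primeFactors_prod hprime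
    have hbound := hyp (∏ ℓ ∈ S, ℓ) hr1 hsq hodd (by rw [hfac]; exact hScard)
      (by rw [hfac]; exact fun ℓ hℓ => ⟨hge ℓ hℓ, hle ℓ hℓ⟩)
    refine hbound.trans ?_
    rw [hHdef]
    have htot : ((L - 1) ^ S.card : ℝ) ≤ ((∏ ℓ ∈ S, ℓ).totient : ℝ) := by
      rw [aux_totient_prod hprime, Nat.cast_prod]
      calc ((L-1):ℝ) ^ S.card = ∏ _q ∈ S, (L-1 : ℝ) := (Finset.prod_const _).symm
        _ ≤ ∏ q ∈ S, ((q - 1 : ℕ) : ℝ) := Finset.prod_le_prod (fun _ _ => hL1.le)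
            (fun q hq => by
              rw [Nat.cast_sub (hprime q hq).one_lt.le]
              push_cast
              linarith [hge q hq])
    have hrle : ((∏ ℓ ∈ S, ℓ : ℕ) : ℝ) ≤ (2 * L) ^ ν := by
      rw [Nat.cast_prod]
      calc ∏ q ∈ S, (q:ℝ) ≤ ∏ _q ∈ S, (2 * L) := Finset.prod_le_prod
            (fun q _ => Nat.cast_nonneg q) (fun q hq => hle q hq)
        _ = (2 * L) ^ S.card := Finset.prod_const _
        _ ≤ (2 * L) ^ ν := pow_le_pow_right₀ (by linarith) hScard
    have hr0 : (0:ℝ) ≤ ((∏ ℓ ∈ S, ℓ : ℕ) : ℝ) := Nat.cast_nonneg _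
    refine mul_le_mul_of_nonneg_left (add_le_add ?_ ?_) hc.le
    · refine div_le_div_of_nonneg_left hP0.le (by positivity) ?_
      exact mul_le_mul_of_nonneg_right htot hlogP.le
    · refine mul_le_mul_of_nonneg_right (mul_le_mul_of_nonneg_right ?_ hsqrtP) hlogP.le
      exact pow_le_pow_left₀ hr0 hrle 3
  -- decompose PF by cardinality
  have hPFdecomp : PF = (Finset.Icc 1 ν).biUnion (fun k => Finset.powersetCard k F) := by
    ext S
    simp only [hPFdef, Finset.mem_filter, Finset.mem_powerset, Finset.mem_biUnion,
      Finset.mem_Icc, Finset.mem_powersetCard]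
    constructor
    · rintro ⟨hsub, hne, hcard⟩
      exact ⟨S.card, ⟨Finset.Nonempty.card_pos hne, hcard⟩, hsub, rfl⟩
    · rintro ⟨k, ⟨hk1, hk2⟩, hsub, hcardeq⟩
      refine ⟨hsub, Finset.card_pos.mp (by omega), by omega⟩
  have hdisj : Set.PairwiseDisjoint ↑(Finset.Icc 1 ν)
      (fun k => Finset.powersetCard k F) := by
    intro i _ j _ hij
    refine Finset.disjoint_left.mpr (fun {S} hSi hSj => hij ?_)
    exact (Finset.mem_powersetCard.mp hSi).2.symm.trans (Finset.mem_powersetCard.mp hSj).2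
  have hsumH : ∑ S ∈ PF, H S.card
      = ∑ k ∈ Finset.Icc 1 ν, ((F.card.choose k : ℝ)) * H k := by
    rw [hPFdecomp, Finset.sum_biUnion hdisj]
    refine Finset.sum_congr rfl (fun k _ => ?_)
    rw [Finset.sum_congr rfl (fun S hS => by
        rw [(Finset.mem_powersetCard.mp hS).2]),
      Finset.sum_const, Finset.card_powersetCard, nsmul_eq_mul]
  -- counting estimates
  have hQ3L : ((F.card : ℝ)) * Real.log L ≤ 3 * L := aux_card_primesL hL
  have hQ : (F.card : ℝ) ≤ 3 * L / Real.log L := by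
    rw [le_div_iff₀ hlogL0]; exact hQ3L
  have hQ0 : (0:ℝ) ≤ (F.card:ℝ) := Nat.cast_nonneg _
  have hQL5 : (F.card : ℝ) / (L - 1) ≤ 5 / Real.log L := by
    rw [div_le_div_iff₀ hL1 hlogL0]
    nlinarith [hQ3L]
  have h3L1 : (1:ℝ) ≤ 3 * L / Real.log L := by
    rw [le_div_iff₀ hlogL0]
    have h5 := Real.log_le_self hL0.le
    linarith
  -- per-k bound
  have perk : ∀ k ∈ Finset.Icc 1 ν, ((F.card.choose k : ℝ)) * H k ≤
      c * ((5:ℝ)^ν * (P / (Real.log L * Real.log P))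
        + (24:ℝ)^ν * (L^(4*ν) * Real.sqrt P * Real.log P / (Real.log L)^ν)) := by
    intro k hk
    obtain ⟨hk1, hk2⟩ := Finset.mem_Icc.mp hk
    have hchoose : ((F.card.choose k : ℝ)) ≤ (F.card : ℝ)^k := by
      exact_mod_cast Nat.choose_le_pow F.card k
    have hX : ((F.card.choose k : ℝ)) * (P / ((L-1)^k * Real.log P))
        ≤ (5:ℝ)^ν * (P / (Real.log L * Real.log P)) := by
      have e1 : ((F.card.choose k : ℝ)) * (P / ((L-1)^k * Real.log P))
          = ((F.card.choose k : ℝ) / (L-1)^k) * (P / Real.log P) := by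
        field_simp
      have h1 : ((F.card.choose k : ℝ)) / (L-1)^k ≤ ((F.card:ℝ)/(L-1))^k := by
        rw [div_pow]
        exact div_le_div₀ (pow_nonneg hQ0 k) hchoose (pow_pos hL1 k) le_rfl
      have h2 : ((F.card:ℝ)/(L-1))^k ≤ (5 / Real.log L)^k :=
        pow_le_pow_left₀ (div_nonneg hQ0 hL1.le) hQL5 k
      have h4 : ((5:ℝ) / Real.log L)^k ≤ (5:ℝ)^ν / Real.log L := by
        rw [div_pow]
        exact div_le_div₀ (by positivity) (pow_le_pow_right₀ (by norm_num) hk2)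
          hlogL0 (le_self_pow₀ hlogL1.le (by omega))
      have h5 : ((F.card.choose k : ℝ)) / (L-1)^k ≤ (5:ℝ)^ν / Real.log L :=
        (h1.trans h2).trans h4
      rw [e1]
      calc ((F.card.choose k : ℝ) / (L-1)^k) * (P / Real.log P)
          ≤ ((5:ℝ)^ν / Real.log L) * (P / Real.log P) :=
            mul_le_mul_of_nonneg_right h5 (by positivity)
        _ = (5:ℝ)^ν * (P / (Real.log L * Real.log P)) := by ring
    have hY : ((F.card.choose k : ℝ)) * (((2 * L) ^ ν) ^ 3 * Real.sqrt P * Real.log P)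
        ≤ (24:ℝ)^ν * (L^(4*ν) * Real.sqrt P * Real.log P / (Real.log L)^ν) := by
      have h6 : ((F.card.choose k : ℝ)) ≤ (3 * L / Real.log L)^ν :=
        hchoose.trans ((pow_le_pow_left₀ hQ0 hQ k).trans (pow_le_pow_right₀ h3L1 hk2))
      have e2 : (3 * L / Real.log L)^ν * ((2 * L) ^ ν) ^ 3
          = (24:ℝ)^ν * L^(4*ν) / (Real.log L)^ν := by
        rw [show (((2:ℝ) * L) ^ ν) ^ 3 = ((2 * L) ^ 3) ^ ν by
          rw [← pow_mul, ← pow_mul, Nat.mul_comm]]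
        rw [div_pow, div_mul_eq_mul_div, ← mul_pow]
        rw [show (3 * L) * ((2:ℝ) * L) ^ 3 = 24 * L^4 by ring, mul_pow, ← pow_mul]
      calc ((F.card.choose k : ℝ)) * (((2 * L) ^ ν) ^ 3 * Real.sqrt P * Real.log P)
          ≤ (3 * L / Real.log L)^ν * (((2 * L) ^ ν) ^ 3 * Real.sqrt P * Real.log P) :=
            mul_le_mul_of_nonneg_right h6 (by positivity)
        _ = ((3 * L / Real.log L)^ν * ((2 * L) ^ ν) ^ 3) * (Real.sqrt P * Real.log P) := by
            ring
        _ = ((24:ℝ)^ν * L^(4*ν) / (Real.log L)^ν) * (Real.sqrt P * Real.log P) := by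
            rw [e2]
        _ = (24:ℝ)^ν * (L^(4*ν) * Real.sqrt P * Real.log P / (Real.log L)^ν) := by ring
    calc ((F.card.choose k : ℝ)) * H k
        = (((F.card.choose k : ℝ)) * (P / ((L-1)^k * Real.log P))
          + ((F.card.choose k : ℝ)) * (((2 * L) ^ ν) ^ 3 * Real.sqrt P * Real.log P))
            * c := by rw [hHdef]; ring
      _ ≤ ((5:ℝ)^ν * (P / (Real.log L * Real.log P))
          + (24:ℝ)^ν * (L^(4*ν) * Real.sqrt P * Real.log P / (Real.log L)^ν)) * c :=
          mul_le_mul_of_nonneg_right (add_le_add hX hY) hc.le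
      _ = c * ((5:ℝ)^ν * (P / (Real.log L * Real.log P))
          + (24:ℝ)^ν * (L^(4*ν) * Real.sqrt P * Real.log P / (Real.log L)^ν)) := by ring
  -- final assembly
  calc ∑ p ∈ goodPrimes W P, (omegaL L (Dp W p) : ℝ) ^ ν
      ≤ ∑ p ∈ goodPrimes W P, ((ν:ℝ) ^ ν *
          ∑ S ∈ PF, (if ((∏ ℓ ∈ S, ℓ : ℕ) : ℤ) ∣ Dp W p then (1:ℝ) else 0)) :=
        Finset.sum_le_sum (fun p _ => step1 p)
    _ = (ν:ℝ) ^ ν * ∑ S ∈ PF, ∑ p ∈ goodPrimes W P,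
          (if ((∏ ℓ ∈ S, ℓ : ℕ) : ℤ) ∣ Dp W p then (1:ℝ) else 0) := by
        rw [← Finset.mul_sum, Finset.sum_comm]
    _ = (ν:ℝ) ^ ν * ∑ S ∈ PF, (((goodPrimes W P).filter
          (fun p => ((∏ ℓ ∈ S, ℓ : ℕ) : ℤ) ∣ Dp W p)).card : ℝ) := by
        rw [Finset.sum_congr rfl (fun S _ => Finset.sum_boole _ _)]
    _ ≤ (ν:ℝ) ^ ν * ∑ S ∈ PF, H S.card :=
        mul_le_mul_of_nonneg_left (Finset.sum_le_sum step3) (by positivity)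
    _ = (ν:ℝ) ^ ν * ∑ k ∈ Finset.Icc 1 ν, ((F.card.choose k : ℝ)) * H k := by rw [hsumH]
    _ ≤ (ν:ℝ) ^ ν * ∑ _k ∈ Finset.Icc 1 ν, (c * ((5:ℝ)^ν * (P / (Real.log L * Real.log P))
          + (24:ℝ)^ν * (L^(4*ν) * Real.sqrt P * Real.log P / (Real.log L)^ν))) :=
        mul_le_mul_of_nonneg_left (Finset.sum_le_sum perk) (by positivity)
    _ = (ν:ℝ) ^ ν * (ν:ℝ) * (c * ((5:ℝ)^ν * (P / (Real.log L * Real.log P))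
          + (24:ℝ)^ν * (L^(4*ν) * Real.sqrt P * Real.log P / (Real.log L)^ν))) := by
        rw [Finset.sum_const, Nat.card_Icc, Nat.add_sub_cancel, nsmul_eq_mul]
        ring
    _ ≤ c * (ν:ℝ) ^ (ν + 1) * 24 ^ ν * (P / (Real.log L * Real.log P) +
          L ^ (4 * ν) * Real.sqrt P * Real.log P / (Real.log L) ^ ν) := by
        have hT1 : (0:ℝ) ≤ P / (Real.log L * Real.log P) := by positivity
        have hT2 : (0:ℝ) ≤ L^(4*ν) * Real.sqrt P * Real.log P / (Real.log L)^ν := by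
          positivity
        have h524 : (5:ℝ)^ν ≤ 24^ν := pow_le_pow_left₀ (by norm_num) (by norm_num) ν
        have key : (5:ℝ)^ν * (P / (Real.log L * Real.log P))
            + (24:ℝ)^ν * (L^(4*ν) * Real.sqrt P * Real.log P / (Real.log L)^ν)
            ≤ (24:ℝ)^ν * (P / (Real.log L * Real.log P)
              + L^(4*ν) * Real.sqrt P * Real.log P / (Real.log L)^ν) := by
          rw [mul_add]
          exact add_le_add (mul_le_mul_of_nonneg_right h524 hT1) le_rfl
        have h0 : (0:ℝ) ≤ c * ((ν:ℝ)^ν * (ν:ℝ)) := by positivity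
        calc (ν:ℝ) ^ ν * (ν:ℝ) * (c * ((5:ℝ)^ν * (P / (Real.log L * Real.log P))
              + (24:ℝ)^ν * (L^(4*ν) * Real.sqrt P * Real.log P / (Real.log L)^ν)))
            = c * ((ν:ℝ)^ν * (ν:ℝ)) * ((5:ℝ)^ν * (P / (Real.log L * Real.log P))
              + (24:ℝ)^ν * (L^(4*ν) * Real.sqrt P * Real.log P / (Real.log L)^ν)) := by
              ring
          _ ≤ c * ((ν:ℝ)^ν * (ν:ℝ)) * ((24:ℝ)^ν * (P / (Real.log L * Real.log P)
              + L^(4*ν) * Real.sqrt P * Real.log P / (Real.log L)^ν)) :=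
              mul_le_mul_of_nonneg_left key h0
          _ = c * (ν:ℝ) ^ (ν + 1) * 24 ^ ν * (P / (Real.log L * Real.log P) +
              L ^ (4 * ν) * Real.sqrt P * Real.log P / (Real.log L) ^ ν) := by
              rw [pow_succ]; ring



end
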